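/- Let K(x,y) be the kernel of a quadrant walk model, a polynomial in x, y whose coefficient of xy is t·(step polynomial terms) - 1, so that the monomial xy appears with coefficient of t-valuation 0. If A(x) ∈ ℝ[[x,t]], B(y) ∈ ℝ[[y,t]] and C(x,y) ∈ ℝ[[x,y,t]] satisfy A(x) - B(y) = K(x,y)·C(x,y), then C(x,y) = 0 and A(x) = B(y) is a series in t alone. -/

import Mathlib

open MvPowerSeries

open Finsupp in
private lemma kernel_C_zero (S : Finset (Fin 3 × Fin 3))
    (A B C : MvPowerSeries (Fin 3) ℝ)
    (hA : ∀ d : Fin 3 →₀ ℕ, d 1 ≠ 0 → MvPowerSeries.coeff (R := ℝ) d A = 0)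
    (hB : ∀ d : Fin 3 →₀ ℕ, d 0 ≠ 0 → MvPowerSeries.coeff (R := ℝ) d B = 0)
    (hK : A - B =
      ((∑ s ∈ S, (MvPowerSeries.X 2 : MvPowerSeries (Fin 3) ℝ)
          * (MvPowerSeries.X 0) ^ (s.1 : ℕ) * (MvPowerSeries.X 1) ^ (s.2 : ℕ))
        - MvPowerSeries.X 0 * MvPowerSeries.X 1) * C) : C = 0 := by
  by_contra hC
  -- the set of nonzero coefficients of C
  set T : Set (Fin 3 →₀ ℕ) := {d | MvPowerSeries.coeff (R := ℝ) d C ≠ 0} with hT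
  have hTne : T.Nonempty := by
    by_contra h
    apply hC
    ext d
    have := Set.not_nonempty_iff_eq_empty.mp h
    have hd : d ∉ T := by rw [this]; exact Set.notMem_empty d
    simpa [hT] using hd
  -- well-founded lex order on (d 2, d 0, d 1)
  let r : (Fin 3 →₀ ℕ) → (Fin 3 →₀ ℕ) → Prop :=
    InvImage (Prod.Lex (· < ·) (Prod.Lex (· < ·) (· < ·)))
      (fun d => (d 2, d 0, d 1))
  have hwf : WellFounded r := by
    apply InvImage.wf
    exact WellFounded.prod_lex Nat.lt_wfRel.wf
      (WellFounded.prod_lex Nat.lt_wfRel.wf Nat.lt_wfRel.wf)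
  obtain ⟨d, hdT, hdmin⟩ := hwf.has_min T hTne
  -- consider the coefficient at e = d + x + y
  set e : Fin 3 →₀ ℕ := d + (single 0 1 + single 1 1) with he
  have he0 : e 0 = d 0 + 1 := by simp [he]
  have he1 : e 1 = d 1 + 1 := by simp [he]
  have he2 : e 2 = d 2 := by simp [he]
  have hLHS : MvPowerSeries.coeff (R := ℝ) e (A - B) = 0 := by
    rw [map_sub, hA e (by omega), hB e (by omega), sub_zero]
  rw [hK] at hLHS
  rw [sub_mul, map_sub, Finset.sum_mul, map_sum] at hLHS
  have hxy : MvPowerSeries.coeff (R := ℝ) e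
      ((MvPowerSeries.X 0 * MvPowerSeries.X 1 : MvPowerSeries (Fin 3) ℝ) * C)
      = MvPowerSeries.coeff (R := ℝ) d C := by
    rw [show (MvPowerSeries.X 0 * MvPowerSeries.X 1 : MvPowerSeries (Fin 3) ℝ)
        = MvPowerSeries.monomial (R := ℝ) (single 0 1 + single 1 1) 1 by
      rw [MvPowerSeries.X, MvPowerSeries.X, MvPowerSeries.monomial_mul_monomial, one_mul]]
    rw [MvPowerSeries.coeff_monomial_mul, if_pos (by rw [he]; exact le_add_self), one_mul,
      he, add_tsub_cancel_right]
  have hsum : ∀ s ∈ S, MvPowerSeries.coeff (R := ℝ) e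
      ((MvPowerSeries.X 2 : MvPowerSeries (Fin 3) ℝ)
        * (MvPowerSeries.X 0) ^ (s.1 : ℕ) * (MvPowerSeries.X 1) ^ (s.2 : ℕ) * C) = 0 := by
    intro s _
    have hmon : (MvPowerSeries.X 2 : MvPowerSeries (Fin 3) ℝ)
        * (MvPowerSeries.X 0) ^ (s.1 : ℕ) * (MvPowerSeries.X 1) ^ (s.2 : ℕ)
        = MvPowerSeries.monomial (R := ℝ)
            (single 2 1 + single 0 (s.1 : ℕ) + single 1 (s.2 : ℕ)) 1 := by
      rw [MvPowerSeries.X, MvPowerSeries.X_pow_eq, MvPowerSeries.X_pow_eq,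
        MvPowerSeries.monomial_mul_monomial, MvPowerSeries.monomial_mul_monomial,
        one_mul, one_mul]
    rw [hmon, MvPowerSeries.coeff_monomial_mul]
    set m : Fin 3 →₀ ℕ := single 2 1 + single 0 (s.1 : ℕ) + single 1 (s.2 : ℕ) with hm
    split_ifs with hle
    · rw [one_mul]
      by_contra hne
      have hmem : e - m ∈ T := hne
      apply hdmin _ hmem
      have h2 : (e - m) 2 < d 2 := by
        have hm2 : m 2 = 1 := by simp [hm]
        have := hle 2
        rw [hm2, he2] at this
        rw [Finsupp.tsub_apply, hm2, he2]
        omega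
      exact Prod.Lex.left _ _ h2
    · rfl
  rw [Finset.sum_eq_zero hsum, hxy, zero_sub, neg_eq_zero] at hLHS
  exact hdT hLHS

/-- **Generic invariant lemma.**  Let `K(x,y)` be the kernel of a quadrant walk model with
(shifted) step set `S ⊆ {0,1,2}²` (the pair `(p,q) ∈ S` encodes the small step
`(p-1, q-1) ∈ {-1,0,1}²`), so that `K = t·Σ_{(p,q)∈S} xᵖyᑫ - xy` and the monomial `xy`
appears with a coefficient of `t`-valuation `0`.  If `A(x) ∈ ℝ[[x,t]]`,
`B(y) ∈ ℝ[[y,t]]` and `C(x,y) ∈ ℝ[[x,y,t]]` satisfy `A(x) - B(y) = K(x,y)·C(x,y)`,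
then `C = 0` and `A = B` is a power series in `t` alone.
(Variables: `0 = x`, `1 = y`, `2 = t`.) -/
theorem generic_invariant_lemma (S : Finset (Fin 3 × Fin 3))
    (A B C : MvPowerSeries (Fin 3) ℝ)
    (hA : ∀ d : Fin 3 →₀ ℕ, d 1 ≠ 0 → MvPowerSeries.coeff (R := ℝ) d A = 0)
    (hB : ∀ d : Fin 3 →₀ ℕ, d 0 ≠ 0 → MvPowerSeries.coeff (R := ℝ) d B = 0)
    (hK : A - B =
      ((∑ s ∈ S, (MvPowerSeries.X 2 : MvPowerSeries (Fin 3) ℝ)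
          * (MvPowerSeries.X 0) ^ (s.1 : ℕ) * (MvPowerSeries.X 1) ^ (s.2 : ℕ))
        - MvPowerSeries.X 0 * MvPowerSeries.X 1) * C) :
    C = 0 ∧ A = B ∧
      ∀ d : Fin 3 →₀ ℕ, (d 0 ≠ 0 ∨ d 1 ≠ 0) → MvPowerSeries.coeff (R := ℝ) d A = 0 := by
  have hC : C = 0 := kernel_C_zero S A B C hA hB hK
  have hAB : A = B := by
    rw [hC, mul_zero] at hK
    exact sub_eq_zero.mp hK
  refine ⟨hC, hAB, fun d hd => ?_⟩
  rcases hd with h | h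
  · rw [hAB]; exact hB d h
  · exact hA d h
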